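/- For every real t ≥ 0, the sum Φ(t) = Σ_{n=1}^∞ (4π²n⁴e^{4t} − 6πn²e^{2t}) · e^{−πn²e^{2t}} · e^{t/2} is strictly positive. -/

import Mathlib

open Real

/-- For every real `t ≥ 0`, the sum
`Φ(t) = Σ_{n=1}^∞ (4π²n⁴e^{4t} − 6πn²e^{2t}) e^{−πn²e^{2t}} e^{t/2}` is strictly positive. -/
theorem phi_pos (t : ℝ) (ht : 0 ≤ t) :
    0 < ∑' n : ℕ+, (4 * π ^ 2 * (n : ℝ) ^ 4 * Real.exp (4 * t)
        - 6 * π * (n : ℝ) ^ 2 * Real.exp (2 * t))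
      * Real.exp (-(π * (n : ℝ) ^ 2 * Real.exp (2 * t))) * Real.exp (t / 2) := by
  have hπ : (3:ℝ) < π := by
    have := Real.pi_gt_three
    linarith
  have h2t : (1:ℝ) ≤ Real.exp (2 * t) := by
    rw [Real.one_le_exp_iff]; linarith
  set f : ℕ+ → ℝ := fun n =>
    (4 * π ^ 2 * (n : ℝ) ^ 4 * Real.exp (4 * t)
        - 6 * π * (n : ℝ) ^ 2 * Real.exp (2 * t))
      * Real.exp (-(π * (n : ℝ) ^ 2 * Real.exp (2 * t))) * Real.exp (t / 2) with hf
  have hn1 : ∀ n : ℕ+, (1:ℝ) ≤ (n : ℝ) := by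
    intro n
    exact_mod_cast n.one_le
  have hpos : ∀ n : ℕ+, 0 < f n := by
    intro n
    have hn := hn1 n
    have he4 : Real.exp (4 * t) = Real.exp (2 * t) * Real.exp (2 * t) := by
      rw [← Real.exp_add]; ring_nf
    have hfac : 0 < 4 * π ^ 2 * (n : ℝ) ^ 4 * Real.exp (4 * t)
        - 6 * π * (n : ℝ) ^ 2 * Real.exp (2 * t) := by
      rw [he4]
      have key : 4 * π ^ 2 * (n : ℝ) ^ 4 * (Real.exp (2 * t) * Real.exp (2 * t))
          - 6 * π * (n : ℝ) ^ 2 * Real.exp (2 * t)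
          = 2 * π * ((n:ℝ)^2 * Real.exp (2*t)) * (2 * π * ((n:ℝ)^2 * Real.exp (2*t)) - 3) := by
        ring
      rw [key]
      have hx : 1 ≤ (n:ℝ)^2 * Real.exp (2*t) := by nlinarith
      have hp := Real.pi_pos
      have h2 : 0 < 2 * π * ((n:ℝ)^2 * Real.exp (2*t)) - 3 := by nlinarith
      have h3 : 0 < 2 * π * ((n:ℝ)^2 * Real.exp (2*t)) := by nlinarith
      exact mul_pos h3 h2
    positivity
  have hnonneg : ∀ n : ℕ+, 0 ≤ f n := fun n => (hpos n).le
  -- summability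
  have hr : |Real.exp (-π)| < 1 := by
    rw [abs_of_pos (Real.exp_pos _)]
    have : Real.exp (-π) < Real.exp 0 := by
      apply Real.exp_lt_exp.mpr; linarith
    simpa using this
  have hsumN : Summable (fun n : ℕ => (4 * π ^ 2 * Real.exp (4 * t) * Real.exp (t / 2))
      * ((n:ℝ) ^ 4 * (Real.exp (-π)) ^ n)) :=
    (summable_pow_mul_geometric_of_norm_lt_one (R := ℝ) 4 hr).mul_left _
  have hsumP : Summable (fun n : ℕ+ => (4 * π ^ 2 * Real.exp (4 * t) * Real.exp (t / 2))
      * (((n:ℕ):ℝ) ^ 4 * (Real.exp (-π)) ^ (n:ℕ))) :=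
    hsumN.comp_injective PNat.coe_injective
  have hs : Summable f := by
    apply Summable.of_nonneg_of_le hnonneg _ hsumP
    intro n
    have hn := hn1 n
    have h1 : f n ≤ 4 * π ^ 2 * (n : ℝ) ^ 4 * Real.exp (4 * t)
        * Real.exp (-(π * (n : ℝ) ^ 2 * Real.exp (2 * t))) * Real.exp (t / 2) := by
      show (4 * π ^ 2 * (n : ℝ) ^ 4 * Real.exp (4 * t)
          - 6 * π * (n : ℝ) ^ 2 * Real.exp (2 * t))
        * Real.exp (-(π * (n : ℝ) ^ 2 * Real.exp (2 * t))) * Real.exp (t / 2) ≤ _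
      have h6 : 0 ≤ 6 * π * (n : ℝ) ^ 2 * Real.exp (2 * t) := by positivity
      gcongr
      linarith
    have h2 : Real.exp (-(π * (n : ℝ) ^ 2 * Real.exp (2 * t))) ≤ (Real.exp (-π)) ^ (n:ℕ) := by
      rw [← Real.exp_nat_mul]
      apply Real.exp_le_exp.mpr
      have hnn : ((n:ℕ):ℝ) = (n:ℝ) := rfl
      rw [hnn]
      have : (n:ℝ) ≤ (n:ℝ)^2 * Real.exp (2*t) := by
        nlinarith
      nlinarith [Real.pi_pos]
    calc f n ≤ 4 * π ^ 2 * (n : ℝ) ^ 4 * Real.exp (4 * t)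
        * Real.exp (-(π * (n : ℝ) ^ 2 * Real.exp (2 * t))) * Real.exp (t / 2) := h1
      _ ≤ 4 * π ^ 2 * (n : ℝ) ^ 4 * Real.exp (4 * t)
        * ((Real.exp (-π)) ^ (n:ℕ)) * Real.exp (t / 2) := by
          have : 0 ≤ 4 * π ^ 2 * (n : ℝ) ^ 4 * Real.exp (4 * t) := by positivity
          have hexp2 := (Real.exp_pos (t/2)).le
          apply mul_le_mul_of_nonneg_right _ hexp2
          exact mul_le_mul_of_nonneg_left h2 this
      _ = (4 * π ^ 2 * Real.exp (4 * t) * Real.exp (t / 2))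
          * (((n:ℕ):ℝ) ^ 4 * (Real.exp (-π)) ^ (n:ℕ)) := by
          ring
  exact Summable.tsum_pos hs hnonneg 1 (hpos 1)
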